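/- Let A, B, C be real numbers with A² + B² ≠ 0, set t = 2A²/(4A²+B²), and define ℓ : ℝ⁵ → ℝ by ℓ(x₁,x₂,x₃,x₄,z) = A(x₁+x₂+x₃+x₄) + Bz + C. Then the function f = ℓ^t satisfies equation (★) at every point of the open set {ℓ > 0}; moreover, if A ≠ 0 and B ≠ 0 then ∂f/∂z is nowhere zero on this set. -/

import Mathlib

/-- The partial derivative of `f : ℝ⁵ → ℝ` in the `i`-th coordinate direction
(coordinates are `x₁, x₂, x₃, x₄` for indices `0,1,2,3` and `z` for index `4`). -/
noncomputable def pd (i : Fin 5) (f : (Fin 5 → ℝ) → ℝ) : (Fin 5 → ℝ) → ℝ :=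
  fun x => fderiv ℝ f x (Pi.single i 1)

open ContinuousLinearMap in
lemma lin_hasFDerivAt (A B C : ℝ) (x : Fin 5 → ℝ) :
    HasFDerivAt (fun y : Fin 5 → ℝ => A * (y 0 + y 1 + y 2 + y 3) + B * y 4 + C)
      (A • ((proj 0 : (Fin 5 → ℝ) →L[ℝ] ℝ) + proj 1 + proj 2 + proj 3) + B • (proj 4 : (Fin 5 → ℝ) →L[ℝ] ℝ)) x := by
  have h : ∀ i : Fin 5, HasFDerivAt (fun y : Fin 5 → ℝ => y i) (proj i : (Fin 5 → ℝ) →L[ℝ] ℝ) x :=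
    fun i => (proj i : (Fin 5 → ℝ) →L[ℝ] ℝ).hasFDerivAt
  exact ((((((h 0).add (h 1)).add (h 2)).add (h 3)).const_mul A).add ((h 4).const_mul B)).add_const C

open ContinuousLinearMap in
lemma lin_apply (A B : ℝ) (i : Fin 5) :
    ((A • ((proj 0 : (Fin 5 → ℝ) →L[ℝ] ℝ) + proj 1 + proj 2 + proj 3) + B • (proj 4 : (Fin 5 → ℝ) →L[ℝ] ℝ) : (Fin 5 → ℝ) →L[ℝ] ℝ))
      (Pi.single i 1) = if i = 4 then B else A := by
  fin_cases i <;> simp [Pi.single_apply]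

lemma pd_pow (A B C : ℝ) (ℓ : (Fin 5 → ℝ) → ℝ)
    (hℓ : ∀ x, ℓ x = A * (x 0 + x 1 + x 2 + x 3) + B * x 4 + C)
    (k s : ℝ) (i : Fin 5) (x : Fin 5 → ℝ) (hx : 0 < ℓ x) :
    pd i (fun y => k * ℓ y ^ s) x
      = (k * s * (if i = 4 then B else A)) * ℓ x ^ (s - 1) := by
  have hℓ' : ℓ = fun y => A * (y 0 + y 1 + y 2 + y 3) + B * y 4 + C := funext hℓ
  subst hℓ'
  have h1 := (lin_hasFDerivAt A B C x).rpow_const (p := s) (Or.inl hx.ne')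
  have h2 := h1.const_mul k
  rw [pd, h2.fderiv]
  simp only [ContinuousLinearMap.smul_apply, smul_eq_mul]
  rw [lin_apply]
  ring

lemma pd_congr_on (ℓ : (Fin 5 → ℝ) → ℝ) (hcont : Continuous ℓ) (g h : (Fin 5 → ℝ) → ℝ)
    (hgh : ∀ y, 0 < ℓ y → g y = h y) (i : Fin 5) (x : Fin 5 → ℝ) (hx : 0 < ℓ x) :
    pd i g x = pd i h x := by
  have hmem : {y | 0 < ℓ y} ∈ nhds x := (isOpen_lt continuous_const hcont).mem_nhds hx
  have hev : g =ᶠ[nhds x] h := Filter.eventuallyEq_of_mem hmem hgh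
  unfold pd
  rw [hev.fderiv_eq]


/-- The left-hand side of equation (★):
`∑_{i=1}^{4} ( f² f_{iiz} − 2 f fᵢ f_{iz} + f f_z f_{ii} − 4 f_z fᵢ² )
  + 4 f_z ( f f_{zz} − 2 f_z² )`. -/
noncomputable def starLHS (f : (Fin 5 → ℝ) → ℝ) (x : Fin 5 → ℝ) : ℝ :=
  (∑ i : Fin 4,
      ((f x) ^ 2 * pd 4 (pd i.castSucc (pd i.castSucc f)) x
        - 2 * f x * pd i.castSucc f x * pd 4 (pd i.castSucc f) x
        + f x * pd 4 f x * pd i.castSucc (pd i.castSucc f) x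
        - 4 * pd 4 f x * (pd i.castSucc f x) ^ 2))
    + 4 * pd 4 f x * (f x * pd 4 (pd 4 f) x - 2 * (pd 4 f x) ^ 2)

/-- for `A² + B² ≠ 0`, `t = 2A²/(4A²+B²)`, and `ℓ = A(x₁+x₂+x₃+x₄)+Bz+C`,
the function `f = ℓ^t` satisfies equation (★) on `{ℓ > 0}`; moreover if `A ≠ 0` and
`B ≠ 0` then `∂f/∂z` is nowhere zero there. -/
theorem stmt_2 (A B C t : ℝ) (hAB : A ^ 2 + B ^ 2 ≠ 0)
    (ht : t = 2 * A ^ 2 / (4 * A ^ 2 + B ^ 2))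
    (ℓ f : (Fin 5 → ℝ) → ℝ)
    (hℓ : ∀ x, ℓ x = A * (x 0 + x 1 + x 2 + x 3) + B * x 4 + C)
    (hf : ∀ x, f x = ℓ x ^ t) :
    (∀ x, 0 < ℓ x → starLHS f x = 0) ∧
    (A ≠ 0 → B ≠ 0 → ∀ x, 0 < ℓ x → pd 4 f x ≠ 0) := by
  have hcont : Continuous ℓ := by
    rw [show ℓ = fun x => A * (x 0 + x 1 + x 2 + x 3) + B * x 4 + C from funext hℓ]
    fun_prop
  have hfE : f = fun y => (1 : ℝ) * ℓ y ^ t := by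
    funext y; rw [hf]; ring
  -- abbreviation for the coefficient
  set c : Fin 5 → ℝ := fun i => if i = 4 then B else A with hc
  have D1 : ∀ (i : Fin 5) (y : Fin 5 → ℝ), 0 < ℓ y →
      pd i (fun y => (1:ℝ) * ℓ y ^ t) y = (1 * t * c i) * ℓ y ^ (t - 1) :=
    fun i y hy => pd_pow A B C ℓ hℓ 1 t i y hy
  have D2 : ∀ (i j : Fin 5) (y : Fin 5 → ℝ), 0 < ℓ y →
      pd j (pd i (fun y => (1:ℝ) * ℓ y ^ t)) y
        = ((1 * t * c i) * (t - 1) * c j) * ℓ y ^ (t - 1 - 1) := by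
    intro i j y hy
    rw [pd_congr_on ℓ hcont _ (fun z => (1 * t * c i) * ℓ z ^ (t - 1))
      (fun z hz => D1 i z hz) j y hy]
    exact pd_pow A B C ℓ hℓ _ _ j y hy
  have D3 : ∀ (i j k : Fin 5) (y : Fin 5 → ℝ), 0 < ℓ y →
      pd k (pd j (pd i (fun y => (1:ℝ) * ℓ y ^ t))) y
        = (((1 * t * c i) * (t - 1) * c j) * (t - 1 - 1) * c k) * ℓ y ^ (t - 1 - 1 - 1) := by
    intro i j k y hy
    rw [pd_congr_on ℓ hcont _ (fun z => ((1 * t * c i) * (t - 1) * c j) * ℓ z ^ (t - 1 - 1))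
      (fun z hz => D2 i j z hz) k y hy]
    exact pd_pow A B C ℓ hℓ _ _ k y hy
  have hcA : ∀ i : Fin 4, c i.castSucc = A := by
    intro i
    have : (i.castSucc : Fin 5) ≠ 4 := (Fin.castSucc_lt_last i).ne
    simp [hc, this]
  have hcB : c 4 = B := by simp [hc]
  constructor
  · intro x hx
    rw [hfE, starLHS]
    have E1 := fun i => D1 i x hx
    have E2 := fun i j => D2 i j x hx
    have E3 := fun i j k => D3 i j k x hx
    simp only [E1, E2, E3, hcA, hcB]
    rw [Fin.sum_univ_four]
    -- now pure algebra in rpow's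
    have hm : ∀ a b : ℝ, ℓ x ^ a * ℓ x ^ b = ℓ x ^ (a + b) :=
      fun a b => (Real.rpow_add hx a b).symm
    set e : ℝ := ℓ x ^ (3 * t - 3) with he
    have h1 : ℓ x ^ t * ℓ x ^ t * ℓ x ^ (t - 1 - 1 - 1) = e := by
      rw [hm, hm, he]; congr 1; ring
    have h2 : ℓ x ^ t * ℓ x ^ (t - 1) * ℓ x ^ (t - 1 - 1) = e := by
      rw [hm, hm, he]; congr 1; ring
    have h3 : ℓ x ^ (t - 1) * ℓ x ^ (t - 1) * ℓ x ^ (t - 1) = e := by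
      rw [hm, hm, he]; congr 1; ring
    have hK : A ^ 2 * (2 - 2 * t - 4 * t ^ 2) - B ^ 2 * (t ^ 2 + t) = 0 := by
      have hpos : 0 < A ^ 2 + B ^ 2 := lt_of_le_of_ne (by positivity) (Ne.symm hAB)
      have hD : 4 * A ^ 2 + B ^ 2 ≠ 0 := by nlinarith
      have h : t * (4 * A ^ 2 + B ^ 2) = 2 * A ^ 2 := by rw [ht]; exact div_mul_cancel₀ _ hD
      linear_combination (-(t + 1)) * h
    linear_combination (4 * t * (t-1) * (t-2) * A^2 * B) * h1
      + (-4 * t^2 * (t-1) * A^2 * B + 4 * t^2 * (t-1) * B^3) * h2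
      + (-16 * t^3 * A^2 * B - 8 * t^3 * B^3) * h3
      + (4 * t * B * e) * hK
  · intro hA hB x hx
    rw [hfE, D1 4 x hx, hcB]
    have ht0 : 0 < t := by
      have h1 : 0 < A ^ 2 := (sq_nonneg A).lt_of_ne' (pow_ne_zero 2 hA)
      rw [ht]; positivity
    exact mul_ne_zero (by simp [ht0.ne', hB]) (Real.rpow_pos_of_pos hx _).ne'
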